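/- Let ς_n : J → Ann_K J with ς_n(J²) = 0 and ς_i : K → Ann_K J with ς_i(J) = 0 (for i = 1, …, n−1) be additive maps. Then the map Υ : R_n(K,J) → R_n(K,J) given by Υ([a_{i,j}]) = (ς_n(a_{1,n}) + Σ_{i=1}^{n−1} ς_i(a_{i+1,i})) e_{n,1} is a derivation of R_n(K,J). -/

import Mathlib

open Matrix

/-- `R_n(K,J)`: the non-unital subring of `n × n` matrices over `K` whose entries on and
above the main diagonal lie in the two-sided ideal `J`. -/
def Rset (n : ℕ) (K : Type) [Ring K] (J : TwoSidedIdeal K) :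
    NonUnitalSubring (Matrix (Fin n) (Fin n) K) where
  carrier := {M | ∀ i j : Fin n, i ≤ j → M i j ∈ J}
  zero_mem' := by intro i j _; simp [J.zero_mem]
  add_mem' := by intro a b ha hb i j h; exact J.add_mem (ha i j h) (hb i j h)
  neg_mem' := by intro a ha i j h; exact J.neg_mem (ha i j h)
  mul_mem' := by
    intro a b ha hb i j h
    show (∑ k, a i k * b k j) ∈ J
    refine J.finsetSum_mem _ _ fun k _ => ?_
    rcases le_or_gt i k with hik | hik
    · exact J.mul_mem_right _ _ (ha i k hik)
    · exact J.mul_mem_left _ _ (hb k j (le_trans hik.le h))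

lemma stdBasis_mem {n : ℕ} {K : Type} [Ring K] {J : TwoSidedIdeal K}
    {i j : Fin n} {y : K} (h : i ≤ j → y ∈ J) :
    Matrix.single i j y ∈ Rset n K J := by
  intro a b hab
  rw [Matrix.single]
  by_cases hc : i = a ∧ j = b
  · obtain ⟨rfl, rfl⟩ := hc
    simpa using h hab
  · simp [Matrix.of_apply, if_neg hc, J.zero_mem]


lemma aux_sum_mem {n : ℕ} {K : Type} [Ring K] {J : TwoSidedIdeal K}
    {A B : Matrix (Fin n) (Fin n) K} (hA : A ∈ Rset n K J) (hB : B ∈ Rset n K J)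
    {r c : Fin n} (h : (r : ℕ) ≤ (c : ℕ) + 1) :
    (∑ k, A r k * B k c) ∈ J := by
  refine J.finsetSum_mem _ _ fun k _ => ?_
  rcases le_or_gt r k with hik | hik
  · exact J.mul_mem_right _ _ (hA r k hik)
  · refine J.mul_mem_left _ _ (hB k c ?_)
    have := Fin.lt_def.mp hik
    simp only [Fin.le_def]
    omega

set_option maxHeartbeats 1000000 in
/-- annihilator derivations.  The map
`Υ([a_{i,j}]) = (ς_n(a_{1,n}) + Σ_{i=1}^{n-1} ς_i(a_{i+1,i})) e_{n,1}` is a derivation of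
`R_n(K,J)`. -/
theorem annihilator_map_is_derivation (n : ℕ) (hn : 2 ≤ n) (K : Type) [Ring K]
    (J : TwoSidedIdeal K) (ςn : K → K) (ς : Fin (n - 1) → K → K)
    (haddn : ∀ y ∈ J, ∀ z ∈ J, ςn (y + z) = ςn y + ςn z)
    (hsqn : ∀ y ∈ J, ∀ z ∈ J, ςn (y * z) = 0)
    (hannn : ∀ y ∈ J, ∀ t ∈ J, ςn y * t = 0 ∧ t * ςn y = 0)
    (hadd : ∀ i : Fin (n - 1), ∀ a b : K, ς i (a + b) = ς i a + ς i b)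
    (hJ : ∀ i : Fin (n - 1), ∀ y ∈ J, ς i y = 0)
    (hann : ∀ i : Fin (n - 1), ∀ x : K, ∀ t ∈ J, ς i x * t = 0 ∧ t * ς i x = 0) :
    ∃ Υ : ↥(Rset n K J) → ↥(Rset n K J),
      (∀ M : ↥(Rset n K J),
        (↑(Υ M) : Matrix (Fin n) (Fin n) K) =
          Matrix.single ⟨n - 1, by omega⟩ ⟨0, by omega⟩
            (ςn ((M : Matrix (Fin n) (Fin n) K) ⟨0, by omega⟩ ⟨n - 1, by omega⟩) +
             ∑ i : Fin (n - 1),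
               ς i ((M : Matrix (Fin n) (Fin n) K)
                 ⟨(i : ℕ) + 1, by have := i.isLt; omega⟩ ⟨(i : ℕ), by have := i.isLt; omega⟩))) ∧
      (∀ a b : ↥(Rset n K J), Υ (a + b) = Υ a + Υ b) ∧
      (∀ a b : ↥(Rset n K J), Υ (a * b) = Υ a * b + a * Υ b) := by
  set p : Fin n := ⟨n - 1, by omega⟩ with hp
  set q : Fin n := ⟨0, by omega⟩ with hq
  have hpq : ¬ (p ≤ q) := by simp [hp, hq, Fin.le_def]; omega
  set v : ↥(Rset n K J) → K := fun M =>
    ςn ((M : Matrix (Fin n) (Fin n) K) q p) +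
      ∑ i : Fin (n - 1),
        ς i ((M : Matrix (Fin n) (Fin n) K)
          ⟨(i : ℕ) + 1, by have := i.isLt; omega⟩ ⟨(i : ℕ), by have := i.isLt; omega⟩) with hv
  -- basic membership facts
  have hmemJ : ∀ M : ↥(Rset n K J), (M : Matrix (Fin n) (Fin n) K) q p ∈ J := fun M =>
    M.2 q p (by simp [hp, hq, Fin.le_def])
  -- annihilator property of v
  have hvann : ∀ M : ↥(Rset n K J), ∀ t ∈ J, v M * t = 0 ∧ t * v M = 0 := by
    intro M t ht
    constructor
    · simp only [hv]
      rw [add_mul, Finset.sum_mul, (hannn _ (hmemJ M) t ht).1]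
      simp only [zero_add]
      exact Finset.sum_eq_zero fun i _ => (hann i _ t ht).1
    · simp only [hv]
      rw [mul_add, Finset.mul_sum, (hannn _ (hmemJ M) t ht).2]
      simp only [zero_add]
      exact Finset.sum_eq_zero fun i _ => (hann i _ t ht).2
  -- ςn 0 = 0
  have hzn : ςn 0 = 0 := by
    have := haddn 0 J.zero_mem 0 J.zero_mem
    simpa using this.symm
  refine ⟨fun M => ⟨Matrix.single p q (v M), stdBasis_mem fun h => absurd h hpq⟩,
    fun M => rfl, ?_, ?_⟩
  · intro a b
    apply Subtype.ext
    show Matrix.single p q (v (a + b)) =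
      Matrix.single p q (v a) + Matrix.single p q (v b)
    rw [← Matrix.single_add]
    have hab : (↑(a + b) : Matrix (Fin n) (Fin n) K) = ↑a + ↑b := rfl
    simp only [hv, hab, Matrix.add_apply]
    have e : ∀ u w : K, u ∈ J → w ∈ J → ∀ f g : Fin (n-1) → K,
        ςn (u + w) + (∑ x, (ς x (f x) + ς x (g x))) =
        ςn u + (∑ x, ς x (f x)) + (ςn w + ∑ x, ς x (g x)) := by
      intro u w hu hw f g
      rw [haddn u hu w hw, Finset.sum_add_distrib, add_add_add_comm]
    rw [Finset.sum_congr rfl fun x _ => hadd x _ _]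
    exact congrArg _ (e _ _ (hmemJ a) (hmemJ b) _ _)
  · intro a b
    apply Subtype.ext
    show Matrix.single p q (v (a * b)) =
      (Matrix.single p q (v a) * (b : Matrix (Fin n) (Fin n) K)) +
      ((a : Matrix (Fin n) (Fin n) K) * Matrix.single p q (v b))
    -- RHS terms are zero
    have h1 : Matrix.single p q (v a) * (b : Matrix (Fin n) (Fin n) K) = 0 := by
      ext i j
      simp only [Matrix.mul_apply, Matrix.zero_apply]
      refine Finset.sum_eq_zero fun k _ => ?_
      rw [Matrix.single]
      by_cases hc : p = i ∧ q = k
      · obtain ⟨rfl, rfl⟩ := hc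
        simp only [Matrix.of_apply, if_pos (⟨rfl, rfl⟩ : p = p ∧ q = q)]
        exact (hvann a _ (b.2 q j (by simp [hq, Fin.le_def]))).1
      · simp [Matrix.of_apply, if_neg hc]
    have h2 : (a : Matrix (Fin n) (Fin n) K) * Matrix.single p q (v b) = 0 := by
      ext i j
      simp only [Matrix.mul_apply, Matrix.zero_apply]
      refine Finset.sum_eq_zero fun k _ => ?_
      rw [Matrix.single]
      by_cases hc : p = k ∧ q = j
      · obtain ⟨rfl, rfl⟩ := hc
        simp only [Matrix.of_apply, if_pos (⟨rfl, rfl⟩ : p = p ∧ q = q)]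
        exact (hvann b _ (a.2 i p (by simp [hp, Fin.le_def]; omega))).2
      · simp [Matrix.of_apply, if_neg hc]
    rw [h1, h2, add_zero]
    -- LHS is zero
    have hvab : v (a * b) = 0 := by
      have hab : (↑(a * b) : Matrix (Fin n) (Fin n) K) = (a : Matrix (Fin n) (Fin n) K) * (b : Matrix (Fin n) (Fin n) K) := rfl
      simp only [hv, hab, Matrix.mul_apply]
      have t1 : ςn (∑ k, (a : Matrix (Fin n) (Fin n) K) q k *
          (b : Matrix (Fin n) (Fin n) K) k p) = 0 := by
        have key : (∑ k, (a : Matrix (Fin n) (Fin n) K) q k *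
            (b : Matrix (Fin n) (Fin n) K) k p) ∈ J ∧
            ςn (∑ k, (a : Matrix (Fin n) (Fin n) K) q k *
            (b : Matrix (Fin n) (Fin n) K) k p) = 0 := by
          refine Finset.sum_induction _ (fun x => x ∈ J ∧ ςn x = 0)
            (fun x y hx hy => ⟨J.add_mem hx.1 hy.1, by
              rw [haddn x hx.1 y hy.1, hx.2, hy.2, add_zero]⟩)
            ⟨J.zero_mem, hzn⟩ fun k _ => ?_
          have hak : (a : Matrix (Fin n) (Fin n) K) q k ∈ J :=
            a.2 q k (by simp [hq, Fin.le_def])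
          have hbk : (b : Matrix (Fin n) (Fin n) K) k p ∈ J :=
            b.2 k p (by simp [hp, Fin.le_def]; omega)
          exact ⟨J.mul_mem_right _ _ hak, hsqn _ hak _ hbk⟩
        exact key.2
      have t2 : ∀ i : Fin (n - 1),
          ς i (∑ k, (a : Matrix (Fin n) (Fin n) K) ⟨(i : ℕ) + 1, by have := i.isLt; omega⟩ k *
            (b : Matrix (Fin n) (Fin n) K) k ⟨(i : ℕ), by have := i.isLt; omega⟩) = 0 := by
        intro i
        exact hJ i _ (aux_sum_mem a.2 b.2 (by simp))
      refine Eq.trans (congrArg₂ (· + ·) t1 (Finset.sum_eq_zero fun i _ => t2 i)) ?_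
      exact add_zero 0
    rw [hvab]
    simp
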